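/- Let P ∈ V1 ⊗ ... ⊗ Vn (n > 2) be a tensor. P is persistent if and only if for every basis {e_0, ..., e_{d1-1}} of V1 the decomposition P = Σ_j e_j ⊗ P_j has all slices P_j nonzero and at least one slice P_j persistent. -/

import Mathlib

open scoped BigOperators

/-- Contraction of a tensor by a covector (given in coordinates) in the first factor. -/
noncomputable def contrFirst {n : ℕ} {d : Fin (n + 1) → ℕ} (f : Fin (d 0) → ℂ)
    (T : ((i : Fin (n + 1)) → Fin (d i)) → ℂ) :
    ((i : Fin n) → Fin (d i.succ)) → ℂ :=
  fun y => ∑ j : Fin (d 0), f j * T (Fin.cons j y)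

/-- `T` is 1-concise: it lies in `V₁' ⊗ V₂ ⊗ ⋯ ⊗ Vₙ` only for `V₁' = V₁`.
In coordinates, `T` lies in `V₁' ⊗ (rest)` iff all its first-factor coordinate
slices (as vectors of `V₁`) lie in `V₁'`. -/
noncomputable def Concise1 {n : ℕ} {d : Fin (n + 1) → ℕ}
    (T : ((i : Fin (n + 1)) → Fin (d i)) → ℂ) : Prop :=
  ∀ V' : Submodule ℂ (Fin (d 0) → ℂ),
    (∀ y : (i : Fin n) → Fin (d i.succ), (fun j => T (Fin.cons j y)) ∈ V') → V' = ⊤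

/-- Persistent tensors, defined inductively on the number of factors (`n + 2` factors). -/
noncomputable def Persistent : (n : ℕ) → (d : Fin (n + 2) → ℕ) →
    (((i : Fin (n + 2)) → Fin (d i)) → ℂ) → Prop
  | 0, _, T => Concise1 T
  | n + 1, d, T => Concise1 T ∧ ∃ S : Submodule ℂ (Fin (d 0) → ℂ), S ≠ ⊤ ∧
      ∀ f : Fin (d 0) → ℂ, f ∉ S → Persistent n (fun i => d i.succ) (contrFirst f T)

/-- Tensor rank: minimal number of simple tensors summing to `T`. -/
noncomputable def tensorRank {ι : Type} [Fintype ι] {κ : ι → Type}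
    (T : ((i : ι) → κ i) → ℂ) : ℕ :=
  sInf {r | ∃ v : Fin r → (i : ι) → κ i → ℂ, ∀ x, T x = ∑ p, ∏ i, v p i (x i)}

/-- Border rank: smallest `r` such that `T` is a limit of tensors of rank at most `r`. -/
noncomputable def borderRank {ι : Type} [Fintype ι] {κ : ι → Type}
    (T : ((i : ι) → κ i) → ℂ) : ℕ :=
  sInf {r | ∃ seq : ℕ → (((i : ι) → κ i) → ℂ),
    (∀ k, tensorRank (seq k) ≤ r) ∧ Filter.Tendsto seq Filter.atTop (nhds T)}

/-- Direct sum of tensors, in coordinates. -/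
noncomputable def dsum {n : ℕ} {a b : Fin n → ℕ}
    (T : ((i : Fin n) → Fin (a i)) → ℂ) (P : ((i : Fin n) → Fin (b i)) → ℂ) :
    ((i : Fin n) → Fin (a i + b i)) → ℂ :=
  fun x =>
    if h : ∀ i, (x i).val < a i then T (fun i => ⟨(x i).val, h i⟩)
    else if h' : ∀ i, a i ≤ (x i).val then
      P (fun i => ⟨(x i).val - a i, by have := (x i).isLt; have := h' i; omega⟩)
    else 0

/-- Kronecker product of tensors (grouping corresponding factors). -/
noncomputable def kron {ι : Type} (κ₁ κ₂ : ι → Type)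
    (A : ((i : ι) → κ₁ i) → ℂ) (B : ((i : ι) → κ₂ i) → ℂ) :
    ((i : ι) → κ₁ i × κ₂ i) → ℂ :=
  fun x => A (fun i => (x i).1) * B (fun i => (x i).2)

/-- Tensor product of tensors (as a tensor with all factors of both). -/
noncomputable def tprodT {ι ι' : Type} (κ₁ : ι → Type) (κ₂ : ι' → Type)
    (A : ((i : ι) → κ₁ i) → ℂ) (B : ((i : ι') → κ₂ i) → ℂ) :
    ((i : ι ⊕ ι') → Sum.elim κ₁ κ₂ i) → ℂ :=
  fun x => A (fun i => x (.inl i)) * B (fun i => x (.inr i))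

/-- The n-qudit GHZ tensor `∑ⱼ |j⟩^⊗n`. -/
noncomputable def GHZ (D n : ℕ) : ((Fin n) → Fin D) → ℂ :=
  fun x => if ∃ j : Fin D, ∀ i, x i = j then 1 else 0

/-- The n-qubit W state: sum of basis vectors with exactly one coordinate equal to 1. -/
noncomputable def Wfun (n : ℕ) : ((Fin n) → Fin 2) → ℂ :=
  fun x => if (Finset.univ.filter fun i => x i = 1).card = 1 then 1 else 0

/-- The n-qudit L state `∑_{j₁+⋯+jₙ = d-1} |j₁⋯jₙ⟩`. -/
noncomputable def Lfun (D n : ℕ) : ((Fin n) → Fin D) → ℂ :=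
  fun x => if ∑ i, (x i).val = D - 1 then 1 else 0

/-- Primitive r-th root of unity `exp(2πi/r)`. -/
noncomputable def zeta (r : ℕ) : ℂ := Complex.exp (2 * Real.pi * Complex.I / r)

section AuxPersistent
variable {D : ℕ}

lemma aux_eq_sum_single (v : Fin D → ℂ) :
    v = ∑ k, v k • (Pi.single k 1 : Fin D → ℂ) := by
  funext k'
  simp [Finset.sum_apply, Pi.single_apply]

lemma aux_dot_single (ψ : (Fin D → ℂ) →ₗ[ℂ] ℂ) (v : Fin D → ℂ) :
    ψ v = ∑ k, v k * ψ (Pi.single k 1) := by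
  conv_lhs => rw [aux_eq_sum_single v]
  rw [map_sum]
  simp [smul_eq_mul]

/-- The coordinate functionals of a basis `e` of `ℂ^D`, expressed as vectors. -/
noncomputable def dualVec (e : Module.Basis (Fin D) ℂ (Fin D → ℂ)) (j : Fin D) : Fin D → ℂ :=
  fun k => e.repr (Pi.single k 1) j

lemma dualVec_dot (e : Module.Basis (Fin D) ℂ (Fin D → ℂ)) (j : Fin D) (v : Fin D → ℂ) :
    ∑ k, dualVec e j k * v k = e.repr v j := by
  rw [← e.coord_apply j v, aux_dot_single (e.coord j) v]
  simp [dualVec, Module.Basis.coord_apply, mul_comm]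

lemma single_eq_sum_dualVec (e : Module.Basis (Fin D) ℂ (Fin D → ℂ)) (k : Fin D) :
    (Pi.single k 1 : Fin D → ℂ) = ∑ j, e j k • dualVec e j := by
  funext k'
  have h := congrFun (e.sum_repr (Pi.single k' 1)) k
  simp only [Finset.sum_apply, Pi.smul_apply, smul_eq_mul] at h ⊢
  rw [show ((Pi.single k 1 : Fin D → ℂ) k') = ((Pi.single k' 1 : Fin D → ℂ) k) by
    simp [Pi.single_apply, eq_comm]]
  rw [← h]
  exact Finset.sum_congr rfl fun j _ => by simp [dualVec, mul_comm]

lemma exists_basis_dualVec_eq (f : Module.Basis (Fin D) ℂ (Fin D → ℂ)) :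
    ∃ e : Module.Basis (Fin D) ℂ (Fin D → ℂ), ∀ j, dualVec e j = f j := by
  set L : (Fin D → ℂ) →ₗ[ℂ] (Fin D → ℂ) := (Matrix.of fun j k => f j k).mulVecLin with hL
  have hinj : Function.Injective L := by
    rw [← LinearMap.ker_eq_bot, eq_bot_iff]
    intro v hv
    simp only [LinearMap.mem_ker] at hv
    have hv' : ∀ j, ∑ k, f j k * v k = 0 := by
      intro j
      have := congrFun hv j
      simpa [hL, Matrix.mulVecLin, Matrix.mulVec, dotProduct] using this
    set ψ : (Fin D → ℂ) →ₗ[ℂ] ℂ := ∑ k, v k • LinearMap.proj k with hψ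
    have hψ_apply : ∀ w, ψ w = ∑ k, v k * w k := by
      intro w; simp [hψ, LinearMap.sum_apply]
    have hψ0 : ψ = 0 := by
      apply f.ext
      intro j
      rw [hψ_apply]
      simpa [mul_comm] using hv' j
    have : ∀ k, v k = 0 := by
      intro k
      have := congrArg (fun g => g (Pi.single k 1 : Fin D → ℂ)) hψ0
      simp only [hψ_apply, LinearMap.zero_apply] at this
      simpa [Pi.single_apply] using this
    exact Submodule.mem_bot _ |>.mpr (funext this)
  have hsurj : Function.Surjective L := LinearMap.injective_iff_surjective.mp hinj
  refine ⟨Module.Basis.ofEquivFun (LinearEquiv.ofBijective L ⟨hinj, hsurj⟩), fun j => ?_⟩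
  funext k
  simp only [dualVec, Module.Basis.ofEquivFun_repr_apply]
  show L (Pi.single k 1) j = f j k
  simp [hL, Matrix.mulVecLin, Matrix.mulVec, dotProduct, Pi.single_apply]

lemma spanning_contains_basis {s : Set (Fin D → ℂ)} (hs : Submodule.span ℂ s = ⊤) :
    ∃ f : Module.Basis (Fin D) ℂ (Fin D → ℂ), ∀ j, f j ∈ s := by
  obtain ⟨b, hbs, hbspan, hbind⟩ := exists_linearIndependent ℂ s
  have hbtop : Submodule.span ℂ (Set.range ((↑) : b → (Fin D → ℂ))) = ⊤ := by
    rw [Subtype.range_coe, hbspan, hs]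
  haveI : Fintype b := hbind.setFinite.fintype
  let B : Module.Basis b ℂ (Fin D → ℂ) := Module.Basis.mk hbind (by rw [hbtop])
  have hcard : Fintype.card b = D := by
    have h1 := Module.finrank_eq_card_basis B
    have h2 : Module.finrank ℂ (Fin D → ℂ) = D := by
      simp [Module.finrank_fintype_fun_eq_card]
    omega
  refine ⟨B.reindex (Fintype.equivFinOfCardEq hcard), fun j => ?_⟩
  rw [Module.Basis.reindex_apply, Module.Basis.mk_apply]
  exact hbs (Subtype.coe_prop _)

lemma exists_basis_containing {g : Fin D → ℂ} (hg : g ≠ 0) :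
    ∃ (f : Module.Basis (Fin D) ℂ (Fin D → ℂ)) (j0 : Fin D), f j0 = g := by
  have hli : LinearIndepOn ℂ id ({g} : Set (Fin D → ℂ)) :=
    (linearIndepOn_singleton_iff ℂ).mpr hg
  set t := hli.extend (Set.subset_univ _) with ht
  have hmem : g ∈ t := hli.subset_extend _ rfl
  have hti : LinearIndependent ℂ ((↑) : t → (Fin D → ℂ)) :=
    hli.linearIndepOn_extend _
  haveI : Fintype t := hti.setFinite.fintype
  let B : Module.Basis t ℂ (Fin D → ℂ) := Module.Basis.extend hli
  have hcard : Fintype.card t = D := by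
    have h1 := Module.finrank_eq_card_basis B
    have h2 : Module.finrank ℂ (Fin D → ℂ) = D := by
      simp [Module.finrank_fintype_fun_eq_card]
    omega
  let σ := Fintype.equivFinOfCardEq hcard
  refine ⟨B.reindex σ, σ ⟨g, hmem⟩, ?_⟩
  rw [Module.Basis.reindex_apply, Equiv.symm_apply_apply]
  exact Module.Basis.extend_apply_self hli ⟨g, hmem⟩

lemma exists_annihilating_vec (V' : Submodule ℂ (Fin D → ℂ)) (h : V' ≠ ⊤) :
    ∃ g : Fin D → ℂ, g ≠ 0 ∧ ∀ v ∈ V', ∑ k, g k * v k = 0 := by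
  obtain ⟨v0, hv0⟩ : ∃ v0, v0 ∉ V' := by
    by_contra hc
    push_neg at hc
    exact h (eq_top_iff.mpr fun v _ => hc v)
  have hq : V'.mkQ v0 ≠ 0 := by
    simpa [Submodule.Quotient.mk_eq_zero] using hv0
  obtain ⟨φ, hφ⟩ : ∃ φ : Module.Dual ℂ ((Fin D → ℂ) ⧸ V'), φ (V'.mkQ v0) ≠ 0 := by
    by_contra hc
    push_neg at hc
    exact hq ((Module.forall_dual_apply_eq_zero_iff ℂ _).mp hc)
  set ψ : (Fin D → ℂ) →ₗ[ℂ] ℂ := φ.comp V'.mkQ with hψ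
  refine ⟨fun k => ψ (Pi.single k 1), ?_, ?_⟩
  · intro hg
    apply hφ
    have : ψ v0 = 0 := by
      rw [aux_dot_single]
      simp only [funext_iff] at hg
      simp [hg]
    simpa [hψ] using this
  · intro v hv
    have : ψ v = 0 := by
      simp [hψ, (Submodule.Quotient.mk_eq_zero V').mpr hv]
    rw [aux_dot_single] at this
    rw [← this]
    exact Finset.sum_congr rfl fun k _ => mul_comm _ _

variable {m : ℕ} {dd : Fin (m + 1) → ℕ}

lemma slices_eq (Q : ((i : Fin (m + 1)) → Fin (dd i)) → ℂ)
    (e : Module.Basis (Fin (dd 0)) ℂ (Fin (dd 0) → ℂ))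
    (Ps : Fin (dd 0) → (((i : Fin m) → Fin (dd i.succ)) → ℂ))
    (hdec : ∀ x, Q x = ∑ j, e j (x 0) * Ps j (fun i => x i.succ)) (j : Fin (dd 0)) :
    Ps j = contrFirst (dualVec e j) Q := by
  funext y
  have hsl : (fun k => Q (Fin.cons k y)) = ∑ j', Ps j' y • e j' := by
    funext k
    rw [hdec (Fin.cons k y)]
    simp [Fin.cons_zero, Fin.cons_succ, Finset.sum_apply, mul_comm]
  rw [contrFirst, show (∑ k, dualVec e j k * Q (Fin.cons k y))
        = e.repr (fun k => Q (Fin.cons k y)) j from dualVec_dot e j _]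
  rw [hsl, e.repr_sum_self]

lemma decomp_canonical (Q : ((i : Fin (m + 1)) → Fin (dd i)) → ℂ)
    (e : Module.Basis (Fin (dd 0)) ℂ (Fin (dd 0) → ℂ)) (x : (i : Fin (m + 1)) → Fin (dd i)) :
    Q x = ∑ j, e j (x 0) * contrFirst (dualVec e j) Q (fun i => x i.succ) := by
  set w : Fin (dd 0) → ℂ := fun k => Q (Fin.cons k (fun i => x i.succ)) with hw
  have h1 : ∀ j, contrFirst (dualVec e j) Q (fun i => x i.succ) = e.repr w j :=
    fun j => dualVec_dot e j w
  have h2 : ∑ j, e j (x 0) * e.repr w j = w (x 0) := by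
    have := congrFun (e.sum_repr w) (x 0)
    simpa [Finset.sum_apply, mul_comm] using this
  simp only [h1, h2]
  rw [hw]
  congr 1
  exact (Fin.cons_self_tail x).symm

end AuxPersistent

theorem persistent_iff_slices (n : ℕ) (d : Fin (n + 3) → ℕ)
    (P : ((i : Fin (n + 3)) → Fin (d i)) → ℂ) :
    Persistent (n + 1) d P ↔
      ∀ (e : Module.Basis (Fin (d 0)) ℂ (Fin (d 0) → ℂ))
        (Ps : Fin (d 0) → (((i : Fin (n + 2)) → Fin (d i.succ)) → ℂ)),
        (∀ x : (i : Fin (n + 3)) → Fin (d i),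
          P x = ∑ j : Fin (d 0), e j (x 0) * Ps j (fun i => x i.succ)) →
        ((∀ j, Ps j ≠ 0) ∧ ∃ j, Persistent n (fun i => d i.succ) (Ps j)) := by
  constructor
  · rintro ⟨hc, S, hStop, hpers⟩
    intro e Ps hdec
    have hPs : ∀ j, Ps j = contrFirst (dualVec e j) P := slices_eq P e Ps hdec
    constructor
    · intro j h0
      have hmem : ∀ y : (i : Fin (n + 2)) → Fin (d i.succ),
          (fun k => P (Fin.cons k y)) ∈ LinearMap.ker (e.coord j) := by
        intro y
        rw [LinearMap.mem_ker, Module.Basis.coord_apply,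
          ← dualVec_dot e j (fun k => P (Fin.cons k y))]
        have hy : contrFirst (dualVec e j) P y = 0 := by
          rw [← hPs j, h0]; rfl
        simpa [contrFirst] using hy
      have htop := hc (LinearMap.ker (e.coord j)) hmem
      have hz : e.coord j = 0 := LinearMap.ker_eq_top.mp htop
      have h1 : e.coord j (e j) = 1 := by
        simp [Module.Basis.coord_apply, Module.Basis.repr_self_apply]
      rw [hz] at h1
      simp at h1
    · have hexists : ∃ j, dualVec e j ∉ S := by
        by_contra hcon
        push_neg at hcon
        apply hStop
        rw [eq_top_iff]
        intro v _
        rw [aux_eq_sum_single v]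
        refine Submodule.sum_mem _ fun k _ => Submodule.smul_mem _ _ ?_
        rw [single_eq_sum_dualVec e k]
        exact Submodule.sum_mem _ fun j _ => Submodule.smul_mem _ _ (hcon j)
      obtain ⟨j, hj⟩ := hexists
      refine ⟨j, ?_⟩
      rw [hPs j]
      exact hpers _ hj
  · intro h
    rcases isEmpty_or_nonempty (Fin (d 0)) with hE | hNE
    · exfalso
      obtain ⟨-, j, -⟩ := h (Pi.basisFun ℂ (Fin (d 0))) (fun _ => 0)
        (fun x => (IsEmpty.false (x 0)).elim)
      exact IsEmpty.false j
    · refine ⟨?_, ?_⟩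
      · -- Concise1
        intro V' hV'
        by_contra hne
        obtain ⟨g, hg0, hgann⟩ := exists_annihilating_vec V' hne
        obtain ⟨f, j0, hfj0⟩ := exists_basis_containing hg0
        obtain ⟨e, he⟩ := exists_basis_dualVec_eq f
        have hdec : ∀ x : (i : Fin (n + 3)) → Fin (d i),
            P x = ∑ j : Fin (d 0), e j (x 0) * contrFirst (f j) P (fun i => x i.succ) := by
          intro x
          have := decomp_canonical P e x
          simpa only [he] using this
        obtain ⟨hnz, -⟩ := h e (fun j => contrFirst (f j) P) hdec
        apply hnz j0
        funext y
        rw [hfj0]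
        show ∑ k, g k * P (Fin.cons k y) = 0
        exact hgann _ (hV' y)
      · refine ⟨Submodule.span ℂ
          {g | ¬ Persistent n (fun i => d i.succ) (contrFirst g P)}, ?_, ?_⟩
        · intro htop
          obtain ⟨f, hf⟩ := spanning_contains_basis htop
          obtain ⟨e, he⟩ := exists_basis_dualVec_eq f
          have hdec : ∀ x : (i : Fin (n + 3)) → Fin (d i),
              P x = ∑ j : Fin (d 0), e j (x 0) * contrFirst (f j) P (fun i => x i.succ) := by
            intro x
            have := decomp_canonical P e x
            simpa only [he] using this
          obtain ⟨-, j, hj⟩ := h e (fun j => contrFirst (f j) P) hdec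
          exact hf j hj
        · intro g hg
          by_contra hnp
          exact hg (Submodule.subset_span hnp)
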